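/- The Hamiltonian system on ℂ⁴ with Hamiltonian H = (p₁² + p₂²)/2 + (q₁² + q₂²)·α·(q₁ − i·q₂), α ∈ ℂ, admits the additional first integral F = i·p₁² + 6·p₁·p₂ − 5i·p₂² + 8α·q₂·(q₁ − i·q₂)², i.e., the Poisson bracket {H, F} vanishes identically. -/
import Mathlib


open MvPolynomial

/-- Variables: X 0 = q₁, X 1 = q₂, X 2 = p₁, X 3 = p₂. -/
noncomputable def Hpoly (α : ℂ) : MvPolynomial (Fin 4) ℂ :=
  C (1 / 2) * (X 2 ^ 2 + X 3 ^ 2) +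
    (X 0 ^ 2 + X 1 ^ 2) * C α * (X 0 - C Complex.I * X 1)

noncomputable def Fpoly (α : ℂ) : MvPolynomial (Fin 4) ℂ :=
  C Complex.I * X 2 ^ 2 + C 6 * X 2 * X 3 - C (5 * Complex.I) * X 3 ^ 2 +
    C (8 * α) * X 1 * (X 0 - C Complex.I * X 1) ^ 2


private lemma cI2 : (C Complex.I : MvPolynomial (Fin 4) ℂ) ^ 2 = -1 := by
  rw [← map_pow, Complex.I_sq, map_neg, map_one]

private lemma cI3 : (C Complex.I : MvPolynomial (Fin 4) ℂ) ^ 3 = -(C Complex.I) := by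
  rw [pow_succ, cI2]; ring

private lemma cI4 : (C Complex.I : MvPolynomial (Fin 4) ℂ) ^ 4 = 1 := by
  rw [show (4:ℕ)=2*2 from rfl, pow_mul, cI2]; ring

noncomputable def Ppoly (α : ℂ) : MvPolynomial (Fin 4) ℂ :=
  (X 2 ^ 2 + X 3 ^ 2) + C 2 * ((X 0 ^ 2 + X 1 ^ 2) * C α * (X 0 - C Complex.I * X 1))

private lemma hHP (α : ℂ) : Hpoly α = C (1/2) * Ppoly α := by
  have h : (C (1/2 : ℂ) * C 2 : MvPolynomial (Fin 4) ℂ) = 1 := by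
    rw [← C_mul]; norm_num
  rw [Hpoly, Ppoly]
  linear_combination (-((X 0 ^ 2 + X 1 ^ 2) * C α * (X 0 - C Complex.I * X 1))) * h

set_option maxHeartbeats 2000000 in
private lemma key (α : ℂ) :
    pderiv 0 (Ppoly α) * pderiv 2 (Fpoly α) - pderiv 2 (Ppoly α) * pderiv 0 (Fpoly α) +
      (pderiv 1 (Ppoly α) * pderiv 3 (Fpoly α) - pderiv 3 (Ppoly α) * pderiv 1 (Fpoly α))
      = 0 := by
  simp only [Ppoly, Fpoly, map_add, map_sub, map_mul, Derivation.leibniz,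
    Derivation.leibniz_pow, pderiv_X, pderiv_C, Pi.single_apply, Fin.reduceEq,
    ite_true, ite_false, smul_eq_mul, mul_zero, zero_mul, mul_one, one_mul,
    add_zero, zero_add, sub_zero, zero_sub, map_zero, smul_zero, nsmul_eq_mul,
    Nat.cast_ofNat, map_pow]
  ring_nf
  simp only [cI2, cI3, cI4, map_ofNat]
  ring
/-- The Poisson bracket {H,F} = ∑ᵢ (∂H/∂qᵢ·∂F/∂pᵢ − ∂H/∂pᵢ·∂F/∂qᵢ) vanishes
identically: F is a first integral of the Hamiltonian system of H. -/
theorem stmt_19 (α : ℂ) :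
    pderiv 0 (Hpoly α) * pderiv 2 (Fpoly α) - pderiv 2 (Hpoly α) * pderiv 0 (Fpoly α) +
      (pderiv 1 (Hpoly α) * pderiv 3 (Fpoly α) - pderiv 3 (Hpoly α) * pderiv 1 (Fpoly α))
      = 0 := by
  rw [hHP, pderiv_C_mul, pderiv_C_mul, pderiv_C_mul, pderiv_C_mul]
  linear_combination (C (1/2 : ℂ) : MvPolynomial (Fin 4) ℂ) * key α
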